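/- Every element obtained from a by finitely many applications of the operations x ↦ x ▷ u and x ↦ x ▷⁻¹ u with u ∈ {a, b, c, d, e, f} lies in the set {x_{p,q,r} : 0 ≤ p ≤ k−1, 0 ≤ q ≤ m−1, 0 ≤ r ≤ n−1}. In particular, the orbit of a under the subgroup of permutations of Q generated by the point symmetries S_a, S_b, S_c, S_d, S_e, S_f has at most k·m·n elements. -/
import Mathlib


/-- A quandle as in the paper: a set with operations `▷` and `▷⁻¹` satisfying
axioms A1, A2, A3. -/
class PaperQuandle (Q : Type*) where
  rhd : Q → Q → Q
  rhdInv : Q → Q → Q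
  fix : ∀ x : Q, rhd x x = x
  inv_rhd : ∀ x y : Q, rhdInv (rhd x y) y = x
  rhd_inv : ∀ x y : Q, rhd (rhdInv x y) y = x
  self_distrib : ∀ x y z : Q, rhd (rhd x y) z = rhd (rhd x z) (rhd y z)

infixl:65 " ▷ " => PaperQuandle.rhd
infixl:65 " ▷⁻¹ " => PaperQuandle.rhdInv

/-- The point symmetry at `u`, as a permutation of `Q`: `x ↦ x ▷ u`,
with inverse `x ↦ x ▷⁻¹ u`. -/
def ptSym {Q : Type*} [PaperQuandle Q] (u : Q) : Equiv.Perm Q where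
  toFun x := x ▷ u
  invFun x := x ▷⁻¹ u
  left_inv x := PaperQuandle.inv_rhd x u
  right_inv x := PaperQuandle.rhd_inv x u

/-- The element `x_{p,q,r} = a^{(ba)^t c^q d^r}` if `p = 2t`, and
`a^{(ba)^t b c^q d^r}` if `p = 2t+1`.  Here the word `ba` (apply `b`, then `a`)
is the permutation `ptSym a * ptSym b`. -/
def X {Q : Type*} [PaperQuandle Q] (a b c d : Q) (p q r : ℤ) : Q :=
  if Even p then
    (ptSym d ^ r) ((ptSym c ^ q) (((ptSym a * ptSym b) ^ (p / 2)) a))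
  else
    (ptSym d ^ r) ((ptSym c ^ q) ((((ptSym a * ptSym b) ^ ((p - 1) / 2)) a) ▷ b))

theorem stmt_16
    {Q : Type*} [PaperQuandle Q] (k : ℤ) (m n : ℕ) (a b c d e f : Q)
    (hk : 1 ≤ k) (hm : 0 < m) (hn : 0 < n)
    (rel_a : ∀ x : Q, x ▷ a ▷ a = x)
    (rel_b : ∀ x : Q, x ▷ b ▷ b = x)
    (rel_e : ∀ x : Q, x ▷ e ▷ e = x)
    (rel_f : ∀ x : Q, x ▷ f ▷ f = x)
    (rel_c : ∀ x : Q, (ptSym c ^ m) x = x)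
    (rel_d : ∀ x : Q, (ptSym d ^ n) x = x)
    (rel_dea : ∀ x : Q, x ▷ d ▷ e ▷ a = x)
    (rel_bdf : ∀ x : Q, x ▷ b ▷ d ▷ f = x)
    (rel_cke : ∀ x : Q, (((ptSym b * ptSym a) ^ k) (x ▷ c)) ▷ a ▷ e = x)
    (rel_fca : ∀ x : Q, (((ptSym b * ptSym a) ^ (k - 1)) (x ▷ f ▷ c)) ▷ a = x) :
    (∀ z : Q,
      (∀ T : Set Q, a ∈ T →
        (∀ x ∈ T, ∀ u ∈ ({a, b, c, d, e, f} : Set Q), x ▷ u ∈ T ∧ x ▷⁻¹ u ∈ T) →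
        z ∈ T) →
      ∃ p q r : ℤ, 0 ≤ p ∧ p ≤ k - 1 ∧ 0 ≤ q ∧ q ≤ (m : ℤ) - 1 ∧
        0 ≤ r ∧ r ≤ (n : ℤ) - 1 ∧ z = X a b c d p q r) ∧
    (MulAction.orbit
      (Subgroup.closure ({ptSym a, ptSym b, ptSym c, ptSym d, ptSym e, ptSym f} :
        Set (Equiv.Perm Q))) a).Finite ∧
    ((MulAction.orbit
      (Subgroup.closure ({ptSym a, ptSym b, ptSym c, ptSym d, ptSym e, ptSym f} :
        Set (Equiv.Perm Q))) a).ncard : ℤ) ≤ k * m * n := by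
  classical
  set A := ptSym a with hAdef
  set B := ptSym b with hBdef
  set Cc := ptSym c with hCdef
  set D := ptSym d with hDdef
  set E := ptSym e with hEdef
  set F := ptSym f with hFdef
  set P := A * B with hPdef
  have hA2 : A * A = 1 := Equiv.ext fun x => rel_a x
  have hB2 : B * B = 1 := Equiv.ext fun x => rel_b x
  have hE2 : E * E = 1 := Equiv.ext fun x => rel_e x
  have hF2 : F * F = 1 := Equiv.ext fun x => rel_f x
  have hCm : Cc ^ (m:ℤ) = 1 := by
    have h : Cc ^ (m:ℕ) = 1 := Equiv.ext fun x => rel_c x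
    rw [zpow_natCast, h]
  have hDn : D ^ (n:ℤ) = 1 := by
    have h : D ^ (n:ℕ) = 1 := Equiv.ext fun x => rel_d x
    rw [zpow_natCast, h]
  have h1 : A * E * D = 1 := Equiv.ext fun x => rel_dea x
  have h2 : F * D * B = 1 := Equiv.ext fun x => rel_bdf x
  have h3 : E * A * (B * A) ^ k * Cc = 1 := Equiv.ext fun x => rel_cke x
  have invA : A⁻¹ = A := inv_eq_of_mul_eq_one_right hA2
  have invB : B⁻¹ = B := inv_eq_of_mul_eq_one_right hB2
  have invE : E⁻¹ = E := inv_eq_of_mul_eq_one_right hE2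
  have invF : F⁻¹ = F := inv_eq_of_mul_eq_one_right hF2
  have hBA : B * A = P⁻¹ := by rw [hPdef, mul_inv_rev, invA, invB]
  have hD1 : D = E * A := by
    have h := inv_eq_of_mul_eq_one_right h1
    rw [← h, mul_inv_rev, invA, invE]
  have hE1 : E = D * A := by rw [hD1, mul_assoc, hA2, mul_one]
  have hF1 : F = D * B := by
    have h := inv_eq_of_mul_eq_one_right h2
    rw [← h, mul_inv_rev, mul_inv_cancel_left, invF]
  have sADi : SemiconjBy A D⁻¹ D := by
    have t : (D * A) * (D * A) = 1 := by rw [← hE1]; exact hE2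
    have h' := inv_eq_of_mul_eq_one_right t
    show A * D⁻¹ = D * A
    rw [← h', mul_inv_rev, invA]
  have sAD : SemiconjBy A D D⁻¹ := by simpa using sADi.inv_right
  have sBDi : SemiconjBy B D⁻¹ D := by
    have t : (D * B) * (D * B) = 1 := by rw [← hF1]; exact hF2
    have h' := inv_eq_of_mul_eq_one_right t
    show B * D⁻¹ = D * B
    rw [← h', mul_inv_rev, invB]
  have sBD : SemiconjBy B D D⁻¹ := by simpa using sBDi.inv_right
  have eAD : A * D = D⁻¹ * A := sAD
  have eADi : A * D⁻¹ = D * A := sADi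
  have eBD : B * D = D⁻¹ * B := sBD
  have sAP : SemiconjBy A P P⁻¹ := by
    show A * P = P⁻¹ * A
    rw [hPdef, ← mul_assoc, hA2, one_mul, ← hBA, mul_assoc, hA2, mul_one]
  have sBP : SemiconjBy B P P⁻¹ := by
    show B * P = P⁻¹ * B
    rw [hPdef, ← hBA, mul_assoc]
  have hAE : A * E = D⁻¹ := by
    rw [hE1, ← mul_assoc, eAD, mul_assoc, hA2, mul_one]
  have hCkey : Cc = P ^ k * D⁻¹ := by
    have h' := inv_eq_of_mul_eq_one_right h3
    rw [← h', mul_inv_rev, mul_inv_rev, invA, invE, hBA, inv_zpow, inv_inv, hAE]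
  have cPD : Commute P D := by
    show P * D = D * P
    rw [hPdef, mul_assoc, eBD, ← mul_assoc, eADi, mul_assoc]
  have cCD : Commute Cc D := by
    rw [hCkey]
    exact (cPD.zpow_left k).mul_left ((Commute.refl D).inv_left)
  have hPkm : P ^ (k * (m:ℤ)) = D ^ (m:ℤ) := by
    have h' := hCm
    rw [hCkey, ((cPD.zpow_left k).inv_right).mul_zpow, ← zpow_mul, inv_zpow,
      ← zpow_neg] at h'
    have h'' := eq_inv_of_mul_eq_one_left h'
    rw [h'', zpow_neg, inv_inv]
  have hAa : A a = a := PaperQuandle.fix a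
  have hBa : B a = P⁻¹ a := by
    have hPAB : P⁻¹ * A = B := by rw [← hBA, mul_assoc, hA2, mul_one]
    rw [← hPAB, Equiv.Perm.mul_apply, hAa]
  -- master semiconjugation lemmas
  have sA : ∀ S R : ℤ, A * (P ^ S * D ^ R) = (P ^ (-S) * D ^ (-R)) * A := by
    intro S R
    have t1 : SemiconjBy A (P ^ S) (P ^ (-S)) := by
      simpa [zpow_neg] using sAP.zpow_right S
    have t2 : SemiconjBy A (D ^ R) (D ^ (-R)) := by
      simpa [zpow_neg] using sAD.zpow_right R
    exact t1.mul_right t2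
  have sB : ∀ S R : ℤ, B * (P ^ S * D ^ R) = (P ^ (-S) * D ^ (-R)) * B := by
    intro S R
    have t1 : SemiconjBy B (P ^ S) (P ^ (-S)) := by
      simpa [zpow_neg] using sBP.zpow_right S
    have t2 : SemiconjBy B (D ^ R) (D ^ (-R)) := by
      simpa [zpow_neg] using sBD.zpow_right R
    exact t1.mul_right t2
  have appmul : ∀ (g h : Equiv.Perm Q) (x : Q), (g * h) x = g (h x) :=
    fun g h x => rfl
  have cDP : ∀ i j : ℤ, D ^ i * P ^ j = P ^ j * D ^ i :=
    fun i j => ((cPD.symm.zpow_left i).zpow_right j).eq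
  have collapse : ∀ i j i' j' : ℤ,
      (P ^ i * D ^ j) * (P ^ i' * D ^ j') = P ^ (i + i') * D ^ (j + j') := by
    intro i j i' j'
    rw [mul_assoc, ← mul_assoc (D ^ j), cDP j i', mul_assoc, ← mul_assoc,
      ← zpow_add, ← zpow_add]
  have peq : ∀ i j i' j' : ℤ, i = i' → j = j' →
      (P ^ i * D ^ j) a = (P ^ i' * D ^ j') a := by
    rintro i j _ _ rfl rfl; rfl
  have formD : D = P ^ (0:ℤ) * D ^ (1:ℤ) := by
    rw [zpow_zero, zpow_one, one_mul]
  have formDinv : D⁻¹ = P ^ (0:ℤ) * D ^ (-1:ℤ) := by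
    rw [zpow_zero, zpow_neg, zpow_one, one_mul]
  have formC : Cc = P ^ k * D ^ (-1:ℤ) := by
    rw [hCkey, zpow_neg, zpow_one]
  have formCinv : Cc⁻¹ = P ^ (-k) * D ^ (1:ℤ) := by
    rw [hCkey, mul_inv_rev, inv_inv, ← zpow_neg, zpow_one]
    exact ((cPD.symm).zpow_right (-k)).eq
  have formPinv : (P⁻¹ : Equiv.Perm Q) = P ^ (-1:ℤ) * D ^ (0:ℤ) := by
    rw [zpow_zero, zpow_neg, zpow_one, mul_one]
  have actD : ∀ S R : ℤ, D ((P ^ S * D ^ R) a) = (P ^ S * D ^ (R+1)) a := by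
    intro S R
    rw [← appmul]
    nth_rewrite 1 [formD]
    rw [collapse]
    exact peq _ _ _ _ (by ring) (by ring)
  have actDinv : ∀ S R : ℤ, D⁻¹ ((P ^ S * D ^ R) a) = (P ^ S * D ^ (R-1)) a := by
    intro S R
    rw [← appmul, formDinv, collapse]
    exact peq _ _ _ _ (by ring) (by ring)
  have actC : ∀ S R : ℤ, Cc ((P ^ S * D ^ R) a) = (P ^ (S+k) * D ^ (R-1)) a := by
    intro S R
    rw [← appmul, formC, collapse]
    exact peq _ _ _ _ (by ring) (by ring)
  have actCinv : ∀ S R : ℤ, Cc⁻¹ ((P ^ S * D ^ R) a) = (P ^ (S-k) * D ^ (R+1)) a := by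
    intro S R
    rw [← appmul, formCinv, collapse]
    exact peq _ _ _ _ (by ring) (by ring)
  have actA : ∀ S R : ℤ, A ((P ^ S * D ^ R) a) = (P ^ (-S) * D ^ (-R)) a := by
    intro S R
    rw [← appmul, sA S R, appmul, hAa]
  have actB : ∀ S R : ℤ, B ((P ^ S * D ^ R) a) = (P ^ (-S-1) * D ^ (-R)) a := by
    intro S R
    rw [← appmul, sB S R, appmul, hBa, ← appmul, formPinv, collapse]
    exact peq _ _ _ _ (by ring) (by ring)
  have actE : ∀ S R : ℤ, E ((P ^ S * D ^ R) a) = (P ^ (-S) * D ^ (-R+1)) a := by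
    intro S R
    rw [hE1, appmul, actA, actD]
  have actF : ∀ S R : ℤ, F ((P ^ S * D ^ R) a) = (P ^ (-S-1) * D ^ (-R+1)) a := by
    intro S R
    rw [hF1, appmul, actB, actD]
  have appPD : ∀ i j S R : ℤ, (P ^ i * D ^ j) ((P ^ S * D ^ R) a)
      = (P ^ (i + S) * D ^ (j + R)) a := by
    intro i j S R; rw [← appmul, collapse]
  have appD : ∀ j S R : ℤ, (D ^ j) ((P ^ S * D ^ R) a) = (P ^ S * D ^ (j + R)) a := by
    intro j S R; rw [← appmul, ← mul_assoc, cDP, mul_assoc, ← zpow_add]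
  have baseP : ∀ u : ℤ, (P ^ u) a = (P ^ u * D ^ (0:ℤ)) a := by
    intro u; rw [zpow_zero, mul_one]
  have formCq : ∀ q : ℤ, Cc ^ q = P ^ (k * q) * D ^ (-q) := by
    intro q
    rw [hCkey, ((cPD.zpow_left k).inv_right).mul_zpow, ← zpow_mul, inv_zpow, ← zpow_neg]
  have appCq : ∀ q S R : ℤ, (Cc ^ q) ((P ^ S * D ^ R) a) = (P ^ (S + k * q) * D ^ (R - q)) a := by
    intro q S R
    rw [formCq, appPD]
    exact peq _ _ _ _ (by ring) (by ring)
  have Xeven : ∀ u q r : ℤ, X a b c d (2 * u) q r = (P ^ (u + k * q) * D ^ (r - q)) a := by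
    intro u q r
    have h2u : (2 * u) / 2 = u := Int.mul_ediv_cancel_left u (by norm_num)
    simp only [X]
    rw [if_pos (even_two_mul u)]
    rw [← hAdef, ← hBdef, ← hCdef, ← hDdef, ← hPdef, h2u, baseP u, appCq, appD]
    exact peq _ _ _ _ (by ring) (by ring)
  have Xodd : ∀ t q r : ℤ, X a b c d (2 * t + 1) q r = (P ^ (-t - 1 + k * q) * D ^ (r - q)) a := by
    intro t q r
    have hodd : ¬ Even (2 * t + 1) := by
      rw [Int.not_even_iff_odd]; exact ⟨t, rfl⟩
    have h2t : (2 * t + 1 - 1) / 2 = t := by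
      rw [show 2 * t + 1 - 1 = 2 * t by ring]
      exact Int.mul_ediv_cancel_left t (by norm_num)
    simp only [X]
    rw [if_neg hodd]
    rw [← hAdef, ← hBdef, ← hCdef, ← hDdef, ← hPdef, h2t]
    have hin : ((P ^ t) a) ▷ b = (P ^ (-t - 1) * D ^ (0:ℤ)) a := by
      have : ((P ^ t) a) ▷ b = B ((P ^ t) a) := rfl
      rw [this, baseP t, actB]
      exact peq _ _ _ _ (by ring) (by ring)
    rw [hin, appCq, appD]
    exact peq _ _ _ _ (by ring) (by ring)
  have hshift : ∀ S R i j : ℤ, (P ^ S * D ^ R) a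
      = (P ^ (S + k * (m:ℤ) * i) * D ^ (R - (m:ℤ) * i + (n:ℤ) * j)) a := by
    intro S R i j
    have e1 : P ^ (S + k * (m:ℤ) * i) = P ^ S * D ^ ((m:ℤ) * i) := by
      rw [zpow_add]
      congr 1
      rw [show k * (m:ℤ) * i = (k * (m:ℤ)) * i by ring, zpow_mul, hPkm, ← zpow_mul]
    have e2 : P ^ (S + k * (m:ℤ) * i) * D ^ (R - (m:ℤ) * i + (n:ℤ) * j) = P ^ S * D ^ R := by
      rw [e1, mul_assoc, ← zpow_add,
        show (m:ℤ) * i + (R - (m:ℤ) * i + (n:ℤ) * j) = R + (n:ℤ) * j by ring,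
        zpow_add, zpow_mul, hDn, one_zpow, mul_one]
    rw [e2]
  have km0 : (0:ℤ) < k := by omega
  have hm0 : (0:ℤ) < (m:ℤ) := by exact_mod_cast hm
  have hn0 : (0:ℤ) < (n:ℤ) := by exact_mod_cast hn
  have red : ∀ S R : ℤ, ∃ p q r : ℤ, 0 ≤ p ∧ p ≤ k - 1 ∧ 0 ≤ q ∧ q ≤ (m:ℤ) - 1 ∧
      0 ≤ r ∧ r ≤ (n:ℤ) - 1 ∧ (P ^ S * D ^ R) a = X a b c d p q r := by
    intro S R
    set u := S % k with hu
    have hu0 : 0 ≤ u := Int.emod_nonneg S (by omega)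
    have hu1 : u < k := Int.emod_lt_of_pos S km0
    have hS : k * (S / k) + u = S := Int.mul_ediv_add_emod S k
    by_cases hcase : 2 * u ≤ k - 1
    · set j := S / k with hj'
      set i := j / (m:ℤ) with hi
      set q := j % (m:ℤ) with hq
      have hq0 : 0 ≤ q := Int.emod_nonneg j (by omega)
      have hq1 : q < m := Int.emod_lt_of_pos j hm0
      have hj : (m:ℤ) * i + q = j := Int.mul_ediv_add_emod j (m:ℤ)
      set T := R + (m:ℤ) * i + q with hT
      set w := T / (n:ℤ) with hw'
      set r := T % (n:ℤ) with hr'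
      have hr0 : 0 ≤ r := Int.emod_nonneg T (by omega)
      have hr1 : r < n := Int.emod_lt_of_pos T hn0
      have hw : (n:ℤ) * w + r = T := Int.mul_ediv_add_emod T (n:ℤ)
      refine ⟨2 * u, q, r, by omega, by omega, hq0, by omega, hr0, by omega, ?_⟩
      rw [Xeven u q r, hshift S R (-i) (-w)]
      exact peq _ _ _ _ (by linear_combination (-1:ℤ) * hS - k * hj)
        (by linear_combination -hw)
    · set j := S / k + 1 with hj'
      set i := j / (m:ℤ) with hi
      set q := j % (m:ℤ) with hq
      have hq0 : 0 ≤ q := Int.emod_nonneg j (by omega)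
      have hq1 : q < m := Int.emod_lt_of_pos j hm0
      have hj : (m:ℤ) * i + q = j := Int.mul_ediv_add_emod j (m:ℤ)
      set T := R + (m:ℤ) * i + q with hT
      set w := T / (n:ℤ) with hw'
      set r := T % (n:ℤ) with hr'
      have hr0 : 0 ≤ r := Int.emod_nonneg T (by omega)
      have hr1 : r < n := Int.emod_lt_of_pos T hn0
      have hw : (n:ℤ) * w + r = T := Int.mul_ediv_add_emod T (n:ℤ)
      refine ⟨2 * (k - u - 1) + 1, q, r, by omega, by omega, hq0, by omega, hr0, by omega, ?_⟩
      rw [Xodd (k - u - 1) q r, hshift S R (-i) (-w)]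
      exact peq _ _ _ _ (by linear_combination (-1:ℤ) * hS - k * hj)
        (by linear_combination -hw)
  set Sset : Set Q := {x | ∃ S R : ℤ, x = (P ^ S * D ^ R) a} with hSsetdef
  have haS : a ∈ Sset := ⟨0, 0, by rw [zpow_zero, zpow_zero, mul_one]; rfl⟩
  have cA1 : ∀ x ∈ Sset, A x ∈ Sset := by
    rintro x ⟨S, R, rfl⟩; exact ⟨-S, -R, actA S R⟩
  have cA2 : ∀ x ∈ Sset, A⁻¹ x ∈ Sset := by
    intro x hx; rw [invA]; exact cA1 x hx
  have cB1 : ∀ x ∈ Sset, B x ∈ Sset := by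
    rintro x ⟨S, R, rfl⟩; exact ⟨-S - 1, -R, actB S R⟩
  have cB2 : ∀ x ∈ Sset, B⁻¹ x ∈ Sset := by
    intro x hx; rw [invB]; exact cB1 x hx
  have cC1 : ∀ x ∈ Sset, Cc x ∈ Sset := by
    rintro x ⟨S, R, rfl⟩; exact ⟨S + k, R - 1, actC S R⟩
  have cC2 : ∀ x ∈ Sset, Cc⁻¹ x ∈ Sset := by
    rintro x ⟨S, R, rfl⟩; exact ⟨S - k, R + 1, actCinv S R⟩
  have cD1 : ∀ x ∈ Sset, D x ∈ Sset := by
    rintro x ⟨S, R, rfl⟩; exact ⟨S, R + 1, actD S R⟩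
  have cD2 : ∀ x ∈ Sset, D⁻¹ x ∈ Sset := by
    rintro x ⟨S, R, rfl⟩; exact ⟨S, R - 1, actDinv S R⟩
  have cE1 : ∀ x ∈ Sset, E x ∈ Sset := by
    rintro x ⟨S, R, rfl⟩; exact ⟨-S, -R + 1, actE S R⟩
  have cE2 : ∀ x ∈ Sset, E⁻¹ x ∈ Sset := by
    intro x hx; rw [invE]; exact cE1 x hx
  have cF1 : ∀ x ∈ Sset, F x ∈ Sset := by
    rintro x ⟨S, R, rfl⟩; exact ⟨-S - 1, -R + 1, actF S R⟩
  have cF2 : ∀ x ∈ Sset, F⁻¹ x ∈ Sset := by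
    intro x hx; rw [invF]; exact cF1 x hx
  have clo : ∀ x ∈ Sset, ∀ u ∈ ({a, b, c, d, e, f} : Set Q),
      x ▷ u ∈ Sset ∧ x ▷⁻¹ u ∈ Sset := by
    intro x hx u hu
    simp only [Set.mem_insert_iff, Set.mem_singleton_iff] at hu
    rcases hu with rfl | rfl | rfl | rfl | rfl | rfl
    · exact ⟨cA1 x hx, cA2 x hx⟩
    · exact ⟨cB1 x hx, cB2 x hx⟩
    · exact ⟨cC1 x hx, cC2 x hx⟩
    · exact ⟨cD1 x hx, cD2 x hx⟩
    · exact ⟨cE1 x hx, cE2 x hx⟩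
    · exact ⟨cF1 x hx, cF2 x hx⟩
  refine ⟨?_, ?_⟩
  · intro z hz
    obtain ⟨S, R, rfl⟩ := hz Sset haS clo
    exact red S R
  have main : ∀ g ∈ Subgroup.closure ({A, B, Cc, D, E, F} : Set (Equiv.Perm Q)),
      (∀ x ∈ Sset, g x ∈ Sset) ∧ (∀ x ∈ Sset, g⁻¹ x ∈ Sset) := by
    intro g hg
    induction hg using Subgroup.closure_induction with
    | mem y hy =>
      simp only [Set.mem_insert_iff, Set.mem_singleton_iff] at hy
      rcases hy with rfl | rfl | rfl | rfl | rfl | rfl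
      · exact ⟨cA1, cA2⟩
      · exact ⟨cB1, cB2⟩
      · exact ⟨cC1, cC2⟩
      · exact ⟨cD1, cD2⟩
      · exact ⟨cE1, cE2⟩
      · exact ⟨cF1, cF2⟩
    | one =>
      constructor <;> intro x hx <;> simpa using hx
    | mul g h hg hh ihg ihh =>
      refine ⟨fun x hx => ?_, fun x hx => ?_⟩
      · rw [appmul]; exact ihg.1 _ (ihh.1 x hx)
      · rw [mul_inv_rev, appmul]; exact ihh.2 _ (ihg.2 x hx)
    | inv g hg ih =>
      refine ⟨ih.2, fun x hx => ?_⟩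
      rw [inv_inv]; exact ih.1 x hx
  have horb : MulAction.orbit (Subgroup.closure ({A, B, Cc, D, E, F} :
      Set (Equiv.Perm Q))) a ⊆ Sset := by
    rintro x ⟨⟨g, hg⟩, rfl⟩
    exact (main g hg).1 a haS
  set Ifin : Finset (ℤ × ℤ × ℤ) :=
    Finset.Icc 0 (k - 1) ×ˢ (Finset.Icc 0 ((m:ℤ) - 1) ×ˢ Finset.Icc 0 ((n:ℤ) - 1))
    with hIfin
  set img : Finset Q := Ifin.image (fun v => X a b c d v.1 v.2.1 v.2.2) with himg
  have hsub : Sset ⊆ ↑img := by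
    rintro x ⟨S, R, rfl⟩
    obtain ⟨p, q, r, h1, h2, h3, h4, h5, h6, heq⟩ := red S R
    rw [himg]
    simp only [Finset.coe_image, Set.mem_image, Finset.mem_coe, hIfin,
      Finset.mem_product, Finset.mem_Icc]
    exact ⟨(p, q, r), ⟨⟨h1, h2⟩, ⟨h3, h4⟩, ⟨h5, h6⟩⟩, heq.symm⟩
  have horb2 := horb.trans hsub
  refine ⟨Set.Finite.subset (Finset.finite_toSet img) horb2, ?_⟩
  have hb1 := Set.ncard_le_ncard horb2 (Finset.finite_toSet img)
  rw [Set.ncard_coe_finset] at hb1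
  have hb2 : img.card ≤ Ifin.card := Finset.card_image_le
  have hb3 : (Ifin.card : ℤ) = k * m * n := by
    rw [hIfin, Finset.card_product, Finset.card_product]
    rw [Int.card_Icc, Int.card_Icc, Int.card_Icc]
    push_cast [Int.toNat_of_nonneg (by omega : (0:ℤ) ≤ k - 1 + 1 - 0),
      Int.toNat_of_nonneg (by omega : (0:ℤ) ≤ (m:ℤ) - 1 + 1 - 0),
      Int.toNat_of_nonneg (by omega : (0:ℤ) ≤ (n:ℤ) - 1 + 1 - 0)]
    ring
  calc ((MulAction.orbit _ a).ncard : ℤ) ≤ (img.card : ℤ) := by exact_mod_cast hb1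
    _ ≤ (Ifin.card : ℤ) := by exact_mod_cast hb2
    _ = k * m * n := hb3
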